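/- Fix M > 0 and define P(α; d, h) = d·α + (h/2)·α² + (M/6)·|α|³ for α, d ∈ ℝ and h ≥ 0. Then for every d ∈ ℝ and h ≥ 0, the function α ↦ P(α; d, h) attains its global minimum over ℝ at the unique point φ(d, h) = −2d/(h + √(h² + 2M|d|)) (understood as 0 when d = 0 and h = 0), this value also equals sign(d)·(h − √(h² + 2M|d|))/M when d ≠ 0, and the minimizer α_min = φ(d, h) satisfies the stationarity identity (M/2)·|α_min|·α_min = −d − h·α_min. Moreover M·|φ(d,h)| ≤ √(2M|d|). -/

import Mathlib

/-- The one-dimensional cubic-regularized second-order model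
`P(α; d, h) = d·α + (h/2)·α² + (M/6)·|α|³`. -/
noncomputable def cubicModel (M d h α : ℝ) : ℝ :=
  d * α + h / 2 * α ^ 2 + M / 6 * |α| ^ 3

/-- The global minimizer `φ(d, h) = −2d/(h + √(h² + 2M|d|))` of the cubic model
(understood as `0` when `d = 0` and `h = 0`, since in Lean division by zero is zero). -/
noncomputable def cubicMin (M d h : ℝ) : ℝ :=
  -2 * d / (h + Real.sqrt (h ^ 2 + 2 * M * |d|))

/-- Strict convexity inequality for `|·|³`, case `0 ≤ y`. -/
private lemma cubic_helper (x y : ℝ) (hy : 0 ≤ y) (hxy : x ≠ y) :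
    3 * |y| * y * (x - y) + |y| ^ 3 < |x| ^ 3 := by
  rw [abs_of_nonneg hy]
  have h0 : x - y ≠ 0 := sub_ne_zero.2 hxy
  have hd : (0:ℝ) < (x - y) ^ 2 := by positivity
  rcases le_or_gt 0 x with hx | hx
  · rw [abs_of_nonneg hx]
    rcases eq_or_lt_of_le hy with rfl | hy'
    · have hx' : 0 < x := lt_of_le_of_ne hx (Ne.symm (by simpa using hxy))
      nlinarith
    · nlinarith [mul_pos hd (by linarith : (0:ℝ) < x + 2 * y)]
  · rw [abs_of_neg hx]
    nlinarith [mul_pos (mul_pos (neg_pos.2 hx) (neg_pos.2 hx)) (neg_pos.2 hx),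
      mul_nonneg (mul_nonneg hy hy) hy, mul_nonneg (mul_nonneg hy hy) (neg_pos.2 hx).le]

/-- Strict convexity inequality for `|·|³`. -/
private lemma cubic_strict (x y : ℝ) (hxy : x ≠ y) :
    3 * |y| * y * (x - y) + |y| ^ 3 < |x| ^ 3 := by
  rcases le_or_gt 0 y with hy | hy
  · exact cubic_helper x y hy hxy
  · have := cubic_helper (-x) (-y) (by linarith) (by intro hc; apply hxy; linarith)
    rw [abs_neg, abs_neg] at this
    nlinarith [this]

/-- For `M > 0`, `d ∈ ℝ`, `h ≥ 0`, the function `α ↦ P(α; d, h)` attains its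
global minimum over `ℝ` at the unique point `φ(d, h) = −2d/(h + √(h² + 2M|d|))`; when `d ≠ 0`
this point also equals `sign(d)·(h − √(h² + 2M|d|))/M`; the minimizer `α_min = φ(d, h)` satisfies
the stationarity identity `(M/2)·|α_min|·α_min = −d − h·α_min`; and `M·|φ(d,h)| ≤ √(2M|d|)`. -/
theorem cubic_model_minimizer (M : ℝ) (hM : 0 < M) (d h : ℝ) (hh : 0 ≤ h) :
    (∀ α : ℝ, cubicModel M d h (cubicMin M d h) ≤ cubicModel M d h α) ∧
    (∀ α : ℝ, cubicModel M d h α = cubicModel M d h (cubicMin M d h) → α = cubicMin M d h) ∧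
    (d ≠ 0 → cubicMin M d h = Real.sign d * (h - Real.sqrt (h ^ 2 + 2 * M * |d|)) / M) ∧
    (M / 2 * |cubicMin M d h| * cubicMin M d h = -d - h * cubicMin M d h) ∧
    M * |cubicMin M d h| ≤ Real.sqrt (2 * M * |d|) := by
  -- general facts about s = √(h² + 2M|d|)
  have harg : 0 ≤ h ^ 2 + 2 * M * |d| := by positivity
  set s := Real.sqrt (h ^ 2 + 2 * M * |d|) with hs
  have hs2 : s ^ 2 = h ^ 2 + 2 * M * |d| := Real.sq_sqrt harg
  have hsnn : 0 ≤ s := Real.sqrt_nonneg _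
  have hmin : cubicMin M d h = -2 * d / (h + s) := by rw [cubicMin, hs]
  -- stationarity identity
  have key : M / 2 * |cubicMin M d h| * cubicMin M d h = -d - h * cubicMin M d h := by
    rcases eq_or_ne d 0 with rfl | hd
    · simp [cubicMin]
    · have hdpos : 0 < |d| := abs_pos.2 hd
      have hspos : 0 < s := by nlinarith
      have hden : 0 < h + s := by linarith
      have habs : |cubicMin M d h| = 2 * |d| / (h + s) := by
        rw [hmin, abs_div, abs_of_pos hden, abs_mul]
        norm_num
      rw [habs, hmin]
      field_simp
      linear_combination hs2
  set a := cubicMin M d h with ha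
  -- the fundamental expansion of the model around the minimizer
  have E : ∀ α : ℝ, cubicModel M d h α - cubicModel M d h a =
      h / 2 * (α - a) ^ 2 + M / 6 * (|α| ^ 3 - |a| ^ 3 - 3 * |a| * a * (α - a)) := by
    intro α
    unfold cubicModel
    linear_combination (α - a) * key
  refine ⟨?_, ?_, ?_, key, ?_⟩
  · -- global minimality
    intro α
    have h1 : 0 ≤ h / 2 * (α - a) ^ 2 := by positivity
    have cub : 3 * |a| * a * (α - a) + |a| ^ 3 ≤ |α| ^ 3 := by
      rcases eq_or_ne α a with rfl | hne
      · simp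
      · exact (cubic_strict α a hne).le
    have h2 : 0 ≤ M / 6 * (|α| ^ 3 - |a| ^ 3 - 3 * |a| * a * (α - a)) := by
      have : 0 ≤ |α| ^ 3 - |a| ^ 3 - 3 * |a| * a * (α - a) := by linarith
      positivity
    linarith [E α]
  · -- uniqueness of the minimizer
    intro α heq
    by_contra hne
    have hcub := cubic_strict α a hne
    have h1 : 0 ≤ h / 2 * (α - a) ^ 2 := by positivity
    have h2 : 0 < M / 6 * (|α| ^ 3 - |a| ^ 3 - 3 * |a| * a * (α - a)) := by
      have : 0 < |α| ^ 3 - |a| ^ 3 - 3 * |a| * a * (α - a) := by linarith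
      positivity
    have hE := E α
    rw [heq] at hE
    linarith
  · -- the explicit sign formula
    intro hd
    have hdpos : 0 < |d| := abs_pos.2 hd
    have hspos : 0 < s := by nlinarith
    have hden : 0 < h + s := by linarith
    have hsd : Real.sign d * |d| = d := by
      rcases lt_trichotomy d 0 with h' | h' | h'
      · rw [Real.sign_of_neg h', abs_of_neg h']; ring
      · exact absurd h' hd
      · rw [Real.sign_of_pos h', abs_of_pos h']; ring
    rw [hmin]
    field_simp
    linear_combination Real.sign d * hs2 + 2 * M * hsd
  · -- the bound M·|φ| ≤ √(2M|d|)
    rcases eq_or_ne d 0 with rfl | hd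
    · have : a = 0 := by rw [ha, cubicMin]; simp
      rw [this]
      simpa using Real.sqrt_nonneg (2 * M * |(0:ℝ)|)
    · have hdpos : 0 < |d| := abs_pos.2 hd
      have hspos : 0 < s := by nlinarith
      have hden : 0 < h + s := by linarith
      have habs : |a| = 2 * |d| / (h + s) := by
        rw [hmin, abs_div, abs_of_pos hden, abs_mul]
        norm_num
      set t := Real.sqrt (2 * M * |d|) with ht
      have ht2 : t ^ 2 = 2 * M * |d| := Real.sq_sqrt (by positivity)
      have htnn : 0 ≤ t := Real.sqrt_nonneg _
      have hst : s ≤ h + t := by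
        rw [hs, ht]
        calc Real.sqrt (h ^ 2 + 2 * M * |d|)
            ≤ Real.sqrt ((h + Real.sqrt (2 * M * |d|)) ^ 2) := by
              apply Real.sqrt_le_sqrt
              have := Real.sq_sqrt (show (0:ℝ) ≤ 2 * M * |d| by positivity)
              nlinarith [mul_nonneg hh (Real.sqrt_nonneg (2 * M * |d|))]
          _ = h + Real.sqrt (2 * M * |d|) := Real.sqrt_sq (by positivity)
      rw [habs]
      rw [show M * (2 * |d| / (h + s)) = 2 * M * |d| / (h + s) by ring,
        div_le_iff₀ hden]
      nlinarith [mul_le_mul_of_nonneg_right (by linarith : s - h ≤ t) hden.le]
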